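/- arXiv:2206.00651 — 3 statements merged into one kernel-verified Lean document; each statement's English description precedes it below -/
import Mathlib

section
/- For functors F, G : C → D and H : D → B between small categories, the homotopic distance satisfies cD(H ∘ F, H ∘ G) ≤ cD(F, G). -/
open CategoryTheory

universe v₁ v₂ v₃ u₁ u₂ u₃

/-- A subcategory of `C`: a set of objects and sets of arrows closed under identities and
composition, whose arrows have source and target in the subcategory. -/
structure Subcat (C : Type u₁) [Category.{v₁} C] where
  objs : Set C
  homs : ∀ x y : C, Set (x ⟶ y)
  id_mem : ∀ {x : C}, x ∈ objs → 𝟙 x ∈ homs x x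
  comp_mem : ∀ {x y z : C} {f : x ⟶ y} {g : y ⟶ z}, f ∈ homs x y → g ∈ homs y z → f ≫ g ∈ homs x z
  src_mem : ∀ {x y : C} {f : x ⟶ y}, f ∈ homs x y → x ∈ objs
  tgt_mem : ∀ {x y : C} {f : x ⟶ y}, f ∈ homs x y → y ∈ objs

variable {C : Type u₁} [Category.{v₁} C]

/-- The type of objects of a subcategory. -/
def Subcat.Obj (U : Subcat C) : Type u₁ := {x : C // x ∈ U.objs}

instance (U : Subcat C) : Category U.Obj where
  Hom x y := {f : x.1 ⟶ y.1 // f ∈ U.homs x.1 y.1}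
  id x := ⟨𝟙 x.1, U.id_mem x.2⟩
  comp f g := ⟨f.1 ≫ g.1, U.comp_mem f.2 g.2⟩
  id_comp f := Subtype.ext (Category.id_comp f.1)
  comp_id f := Subtype.ext (Category.comp_id f.1)
  assoc f g h := Subtype.ext (Category.assoc f.1 g.1 h.1)

/-- The inclusion functor of a subcategory. -/
def Subcat.incl (U : Subcat C) : U.Obj ⥤ C where
  obj x := x.1
  map f := f.1

/-- A chain of composable arrows lies in the subcategory `U`. -/
def Subcat.ContainsChain (U : Subcat C) {m : ℕ} (c : Fin (m + 1) → C)
    (f : ∀ i : Fin m, c i.castSucc ⟶ c i.succ) : Prop :=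
  (∀ i, c i ∈ U.objs) ∧ ∀ i, f i ∈ U.homs (c i.castSucc) (c i.succ)

/-- A family of subcategories is a geometric cover if every finite chain of composable
arrows lies in some member of the family. -/
def GeometricCover {ι : Type} (U : ι → Subcat C) : Prop :=
  ∀ (m : ℕ) (c : Fin (m + 1) → C) (f : ∀ i : Fin m, c i.castSucc ⟶ c i.succ),
    ∃ i : ι, (U i).ContainsChain c f

/-- Two functors are homotopic if they are connected by a finite zigzag of natural
transformations. -/
def Homotopic {A : Type u₂} {B : Type u₃} [Category.{v₂} A] [Category.{v₃} B]
    (F G : A ⥤ B) : Prop :=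
  Zigzag F G

variable {D : Type u₂} [Category.{v₂} D]

/-- `C` admits a geometric cover by `n + 1` homotopy domains for `F` and `G`. -/
def DistLE (n : ℕ) (F G : C ⥤ D) : Prop :=
  ∃ U : Fin (n + 1) → Subcat C, GeometricCover U ∧
    ∀ i, Homotopic ((U i).incl ⋙ F) ((U i).incl ⋙ G)

/-- The homotopic distance between two functors, as an extended natural number. -/
noncomputable def cD (F G : C ⥤ D) : ℕ∞ :=
  sInf {n : ℕ∞ | ∃ m : ℕ, n = (m : ℕ∞) ∧ DistLE m F G}

/-- The homotopic distance does not increase under postcomposition: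
`cD(H ∘ F, H ∘ G) ≤ cD(F, G)`. -/
theorem cD_postcomp_le {B : Type u₃} [Category.{v₃} B]
    (F G : C ⥤ D) (H : D ⥤ B) :
    cD (F ⋙ H) (G ⋙ H) ≤ cD F G := by
  apply sInf_le_sInf
  rintro n ⟨m, rfl, U, hcov, hhtp⟩
  refine ⟨m, rfl, U, hcov, fun i => ?_⟩
  have := zigzag_obj_of_zigzag ((Functor.whiskeringRight (U i).Obj D B).obj H) (hhtp i)
  exact this
end

section
/- For any two functors F, G : C → D between small categories, the homotopic distance is bounded above by the categorical complexity of the target: cD(F,G) ≤ cTC(D) = cD(p₁, p₂), where p₁, p₂ : D × D → D are the projections. -/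
open CategoryTheory

universe v₁ v₂ v₃ u₁ u₂ u₃

variable {C : Type u₁} [Category.{v₁} C]

variable {D : Type u₂} [Category.{v₂} D]

/-- The categorical complexity of `D` is the homotopic distance between the two
projections `D × D ⥤ D`. -/
noncomputable def cTC (D : Type u₂) [Category.{v₂} D] : ℕ∞ :=
  cD (CategoryTheory.Prod.fst D D) (CategoryTheory.Prod.snd D D)

/-- Pullback of a subcategory along a functor. -/
def Subcat.pull {E : Type u₃} [Category.{v₃} E] (H : C ⥤ E) (V : Subcat E) : Subcat C where
  objs := {x | H.obj x ∈ V.objs}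
  homs x y := {f | H.map f ∈ V.homs (H.obj x) (H.obj y)}
  id_mem h := by simpa using V.id_mem h
  comp_mem hf hg := by simpa using V.comp_mem hf hg
  src_mem hf := V.src_mem hf
  tgt_mem hf := V.tgt_mem hf

/-- The lift of `H` to the pullback subcategory. -/
def Subcat.pullLift {E : Type u₃} [Category.{v₃} E] (H : C ⥤ E) (V : Subcat E) :
    (V.pull H).Obj ⥤ V.Obj where
  obj x := ⟨H.obj x.1, x.2⟩
  map f := ⟨H.map f.1, f.2⟩
  map_id x := Subtype.ext (H.map_id x.1)
  map_comp f g := Subtype.ext (H.map_comp f.1 g.1)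

lemma Homotopic.whiskerL {A : Type u₂} {B : Type u₃} [Category.{v₂} A] [Category.{v₃} B]
    {A' : Type u₁} [Category.{v₁} A'] (K : A' ⥤ A) {F G : A ⥤ B}
    (h : Homotopic F G) : Homotopic (K ⋙ F) (K ⋙ G) :=
  zigzag_obj_of_zigzag ((Functor.whiskeringLeft A' A B).obj K) h

/-- The homotopic distance of any two functors `F, G : C ⥤ D` is bounded above by the
categorical complexity of the target: `cD(F, G) ≤ cTC(D) = cD(p₁, p₂)`. -/
theorem cD_le_cTC (F G : C ⥤ D) : cD F G ≤ cTC D := by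
  apply sInf_le_sInf
  rintro n ⟨m, rfl, V, hcov, hhtp⟩
  refine ⟨m, rfl, fun i => (V i).pull (F.prod' G), ?_, ?_⟩
  · intro k c f
    obtain ⟨i, hc, hf⟩ := hcov k (fun j => (F.prod' G).obj (c j))
      (fun j => (F.prod' G).map (f j))
    exact ⟨i, hc, hf⟩
  · intro i
    have h := (hhtp i).whiskerL ((V i).pullLift (F.prod' G))
    exact h
end

section
/- The higher categorical complexity equals the higher homotopic distance of the projections: for any small category C and n ≥ 1, cTC_n(C) = cD(p₁, …, p_n), where p_i : Cⁿ → C are the n projection functors. -/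
open CategoryTheory

universe v₁ v₂ v₃ u₁ u₂ u₃

variable {C : Type u₁} [Category.{v₁} C]

variable {D : Type u₂} [Category.{v₂} D]

/-- `C` admits a geometric cover by `m + 1` subcategories on which all the functors in the
family are pairwise homotopic. -/
def HDistLE {ι : Type} (m : ℕ) (F : ι → (C ⥤ D)) : Prop :=
  ∃ U : Fin (m + 1) → Subcat C, GeometricCover U ∧
    ∀ (k : Fin (m + 1)) (i j : ι), Homotopic ((U k).incl ⋙ F i) ((U k).incl ⋙ F j)

/-- The higher homotopic distance of a family of functors. -/
noncomputable def hcD {ι : Type} (F : ι → (C ⥤ D)) : ℕ∞ :=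
  sInf {n : ℕ∞ | ∃ m : ℕ, n = (m : ℕ∞) ∧ HDistLE m F}

/-- The `n`-fold diagonal functor `C ⥤ Cⁿ`. -/
def diagN (C : Type u₁) [Category.{v₁} C] (n : ℕ) : C ⥤ (Fin n → C) :=
  Functor.pi' (fun _ => 𝟭 C)

/-- The higher `n`-th categorical complexity of `C`: the least `m` such that `Cⁿ` admits a
geometric cover by `m + 1` higher `n`-Farber subcategories, i.e. subcategories `Ω` with a
functor `F : Ω ⥤ C` such that `Δₙ ∘ F` is homotopic to the inclusion of `Ω`. -/
noncomputable def cTCn (C : Type u₁) [Category.{v₁} C] (n : ℕ) : ℕ∞ :=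
  sInf {N : ℕ∞ | ∃ m : ℕ, N = (m : ℕ∞) ∧
    ∃ U : Fin (m + 1) → Subcat (Fin n → C), GeometricCover U ∧
      ∀ k, ∃ F : (U k).Obj ⥤ C, Homotopic (F ⋙ diagN C n) ((U k).incl)}


section ZigzagAux

/-- A span between two objects: an object mapping to both. -/
def Sp {J : Type*} [Category J] (x y : J) : Prop :=
  ∃ w : J, Nonempty (w ⟶ x) ∧ Nonempty (w ⟶ y)

lemma Sp.refl {J : Type*} [Category J] (x : J) : Sp x x := ⟨x, ⟨𝟙 x⟩, ⟨𝟙 x⟩⟩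

lemma sp_of_zag {J : Type*} [Category J] {x y : J} (h : Zag x y) : Sp x y := by
  rcases h with h | h
  · exact ⟨x, ⟨𝟙 x⟩, h⟩
  · exact ⟨y, h, ⟨𝟙 y⟩⟩

lemma zigzag_of_sp {J : Type*} [Category J] {x y : J} (h : Sp x y) : Zigzag x y := by
  obtain ⟨w, ⟨f⟩, ⟨g⟩⟩ := h
  exact Zigzag.of_inv_hom f g

/-- A chain of spans of length `m` from `x` to `y`. -/
def SpChain {J : Type*} [Category J] (m : ℕ) (x y : J) : Prop :=
  ∃ c : ℕ → J, c 0 = x ∧ c m = y ∧ ∀ k < m, Sp (c k) (c (k + 1))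

lemma spChain_of_zigzag {J : Type*} [Category J] {x y : J} (h : Zigzag x y) :
    ∃ m, SpChain m x y := by
  induction h with
  | refl => exact ⟨0, fun _ => x, rfl, rfl, fun k hk => absurd hk (Nat.not_lt_zero k)⟩
  | @tail b y' _ hzag ih =>
    obtain ⟨m, cc, h0, hm, hs⟩ := ih
    refine ⟨m + 1, fun k => if k ≤ m then cc k else y', ?_, ?_, ?_⟩
    · show (if 0 ≤ m then cc 0 else y') = x
      rw [if_pos (Nat.zero_le m)]; exact h0
    · show (if m + 1 ≤ m then cc (m + 1) else y') = y'
      rw [if_neg (by omega)]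
    · intro k hk
      show Sp (if k ≤ m then cc k else y') (if k + 1 ≤ m then cc (k + 1) else y')
      rcases Nat.lt_or_ge k m with h' | h'
      · rw [if_pos (by omega), if_pos (by omega)]
        exact hs k h'
      · have hk' : k = m := by omega
        subst hk'
        rw [if_pos le_rfl, if_neg (by omega), hm]
        exact sp_of_zag hzag

lemma spChain_mono {J : Type*} [Category J] {m m' : ℕ} {x y : J}
    (h : SpChain m x y) (hle : m ≤ m') : SpChain m' x y := by
  obtain ⟨c, h0, hm, hs⟩ := h
  refine ⟨fun k => c (min k m), ?_, ?_, ?_⟩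
  · show c (min 0 m) = x
    rw [Nat.min_eq_left (Nat.zero_le m)]; exact h0
  · show c (min m' m) = y
    rw [Nat.min_eq_right hle]; exact hm
  · intro k hk
    show Sp (c (min k m)) (c (min (k + 1) m))
    rcases Nat.lt_or_ge k m with h' | h'
    · rw [Nat.min_eq_left (by omega), Nat.min_eq_left (by omega)]
      exact hs k h'
    · rw [Nat.min_eq_right h', Nat.min_eq_right (by omega)]
      exact Sp.refl _

lemma zigzag_of_spChain {J : Type*} [Category J] {m : ℕ} {x y : J}
    (h : SpChain m x y) : Zigzag x y := by
  obtain ⟨c, h0, hm, hs⟩ := h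
  have key : ∀ k, k ≤ m → Zigzag (c 0) (c k) := by
    intro k
    induction k with
    | zero => intro _; exact Zigzag.refl _
    | succ k ih =>
      intro hk
      exact (ih (by omega)).trans (zigzag_of_sp (hs k (by omega)))
  rw [← h0, ← hm]
  exact key m le_rfl

variable {A : Type u₂} [Category.{v₂} A]

lemma sp_pi' {n : ℕ} (f g : Fin n → (A ⥤ C)) (h : ∀ i, Sp (f i) (g i)) :
    Sp (Functor.pi' f) (Functor.pi' g) := by
  choose W hα hβ using h
  have α := fun i => (hα i).some
  have β := fun i => (hβ i).some
  refine ⟨Functor.pi' W,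
    ⟨⟨fun a => fun i => (α i).app a, ?_⟩⟩, ⟨⟨fun a => fun i => (β i).app a, ?_⟩⟩⟩
  · intro a b u
    funext i
    exact (α i).naturality u
  · intro a b u
    funext i
    exact (β i).naturality u

lemma zigzag_pi' {n : ℕ} (f g : Fin n → (A ⥤ C)) (h : ∀ i, Zigzag (f i) (g i)) :
    Zigzag (Functor.pi' f) (Functor.pi' g) := by
  have h' := fun i => spChain_of_zigzag (h i)
  choose mi hmi using h'
  have h2 : ∀ i, SpChain (Finset.univ.sup mi) (f i) (g i) := fun i =>
    spChain_mono (hmi i) (Finset.le_sup (Finset.mem_univ i))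
  choose c h0 hM hs using h2
  apply zigzag_of_spChain (m := Finset.univ.sup mi)
  refine ⟨fun k => Functor.pi' (fun i => c i k), ?_, ?_, ?_⟩
  · exact congrArg _ (funext h0)
  · exact congrArg _ (funext hM)
  · intro k hk
    exact sp_pi' _ _ (fun i => hs i k hk)

lemma zigzag_of_comp_eval {n : ℕ} {F G : A ⥤ (Fin n → C)}
    (h : ∀ i, Zigzag (F ⋙ Pi.eval (fun _ : Fin n => C) i)
      (G ⋙ Pi.eval (fun _ : Fin n => C) i)) : Zigzag F G := by
  have hF : F = Functor.pi' (fun i => F ⋙ Pi.eval (fun _ : Fin n => C) i) :=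
    (Functor.pi_ext _ _ (fun i => by rw [Functor.pi'_eval])).symm
  have hG : G = Functor.pi' (fun i => G ⋙ Pi.eval (fun _ : Fin n => C) i) :=
    (Functor.pi_ext _ _ (fun i => by rw [Functor.pi'_eval])).symm
  rw [hF, hG]
  exact zigzag_pi' _ _ h

lemma zigzag_whisker {B : Type*} {E : Type*} [Category B] [Category E]
    {F G : A ⥤ B} (H : B ⥤ E) (h : Zigzag F G) : Zigzag (F ⋙ H) (G ⋙ H) :=
  zigzag_obj_of_zigzag ((Functor.whiskeringRight A B E).obj H) h

end ZigzagAux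

/-- The higher categorical complexity equals the higher homotopic distance of the
projections `pᵢ : Cⁿ ⥤ C`. -/
theorem cTCn_eq_hcD (C : Type u₁) [Category.{v₁} C] (n : ℕ) (hn : 1 ≤ n) :
    cTCn C n = hcD (fun i : Fin n => Pi.eval (fun _ : Fin n => C) i) := by
  have key : ∀ m : ℕ,
      (∃ U : Fin (m + 1) → Subcat (Fin n → C), GeometricCover U ∧
        ∀ k, ∃ F : (U k).Obj ⥤ C, Homotopic (F ⋙ diagN C n) ((U k).incl)) ↔
      HDistLE m (fun i : Fin n => Pi.eval (fun _ : Fin n => C) i) := by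
    intro m
    constructor
    · rintro ⟨U, hU, hF⟩
      refine ⟨U, hU, fun k i j => ?_⟩
      obtain ⟨F, hF'⟩ := hF k
      have hz : ∀ i : Fin n, Zigzag F ((U k).incl ⋙ Pi.eval (fun _ : Fin n => C) i) := by
        intro i
        have h2 := zigzag_whisker (Pi.eval (fun _ : Fin n => C) i) hF'
        rwa [Functor.assoc,
          show diagN C n ⋙ Pi.eval (fun _ : Fin n => C) i = 𝟭 C from Functor.pi'_eval _ i,
          Functor.comp_id] at h2
      exact (hz i).symm.trans (hz j)
    · rintro ⟨U, hU, hH⟩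
      refine ⟨U, hU, fun k => ?_⟩
      refine ⟨(U k).incl ⋙ Pi.eval (fun _ : Fin n => C) ⟨0, hn⟩, ?_⟩
      apply zigzag_of_comp_eval
      intro i
      rw [Functor.assoc,
        show diagN C n ⋙ Pi.eval (fun _ : Fin n => C) i = 𝟭 C from Functor.pi'_eval _ i,
        Functor.comp_id]
      exact hH k ⟨0, hn⟩ i
  unfold cTCn hcD
  congr 1
  ext N
  simp only [Set.mem_setOf_eq]
  constructor <;> rintro ⟨m, rfl, h⟩
  · exact ⟨m, rfl, (key m).mp h⟩
  · exact ⟨m, rfl, (key m).mpr h⟩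
end
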